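/- There exists ρ₀ > 0 such that for every ρ ∈ (0, ρ₀), H¹( (⋃_{i=1}^N Γ_i) ∩ B_ρ(x₀) ) ≤ N ρ + N ρ² · max_{1 ≤ i ≤ N} sup_{t ∈ [0,L_i]} ‖γ_i''(t)‖. -/

import Mathlib

open MeasureTheory Filter Set Topology NNReal ENNReal

/-- Second-order lower bound: an arclength curve moves away from its start. -/
lemma curve_lower {E : Type*} [NormedAddCommGroup E] [InnerProductSpace ℝ E]
    {L C : ℝ} (hL : 0 < L) {γ : ℝ → E}
    (hγ : ContDiffOn ℝ 2 γ (Set.Icc 0 L))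
    (hC : ∀ t ∈ Set.Icc (0:ℝ) L,
      ‖derivWithin (derivWithin γ (Set.Icc 0 L)) (Set.Icc 0 L) t‖ ≤ C)
    (hunit : ∀ t ∈ Set.Icc (0:ℝ) L, ‖derivWithin γ (Set.Icc 0 L) t‖ = 1) :
    ∀ t ∈ Set.Icc (0:ℝ) L, t - C * t ^ 2 / 2 ≤ ‖γ t - γ 0‖ := by
  set s : Set ℝ := Set.Icc 0 L with hsdef
  have hud : UniqueDiffOn ℝ s := uniqueDiffOn_Icc hL
  set f : ℝ → E := derivWithin γ s with hfdef
  set g : ℝ → E := derivWithin f s with hgdef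
  have h0s : (0:ℝ) ∈ s := ⟨le_refl 0, hL.le⟩
  have hfd : ∀ t ∈ s, HasDerivWithinAt γ (f t) s t := fun t ht =>
    ((hγ.differentiableOn (by norm_num)) t ht).hasDerivWithinAt
  have hf1 : ContDiffOn ℝ 1 f s := hγ.derivWithin hud (by norm_num)
  have hgd : ∀ t ∈ s, HasDerivWithinAt f (g t) s t := fun t ht =>
    ((hf1.differentiableOn one_ne_zero) t ht).hasDerivWithinAt
  -- Lipschitz bound on f
  have step1 : ∀ t ∈ s, ‖f t - f 0‖ ≤ C * (t - 0) :=
    norm_image_sub_le_of_norm_deriv_le_segment' hgd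
      (fun x hx => hC x (Set.Ico_subset_Icc_self hx))
  -- second order bound
  set F : ℝ → E := fun u => γ u - γ 0 - u • f 0 with hFdef
  have hFcont : ContinuousOn F s := by
    apply ContinuousOn.sub (ContinuousOn.sub hγ.continuousOn continuousOn_const)
    exact (continuous_id.smul continuous_const).continuousOn
  have hF' : ∀ x ∈ Set.Ico (0:ℝ) L, HasDerivWithinAt F (f x - f 0) (Set.Ici x) x := by
    intro x hx
    have h1 : HasDerivWithinAt γ (f x) (Set.Ici x) x :=
      (hfd x (Set.Ico_subset_Icc_self hx)).mono_of_mem_nhdsWithin (Icc_mem_nhdsGE_of_mem hx)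
    have h2 : HasDerivWithinAt (fun u : ℝ => u • f 0) ((1:ℝ) • f 0) (Set.Ici x) x :=
      ((hasDerivAt_id x).smul_const (f 0)).hasDerivWithinAt
    have := (h1.sub (hasDerivWithinAt_const x _ (γ 0))).sub h2
    simp only [one_smul, sub_zero] at this
    exact this
  have hB : ∀ x : ℝ, HasDerivAt (fun u => C * u ^ 2 / 2) (C * x) x := by
    intro x
    have h := ((hasDerivAt_pow 2 x).const_mul C).div_const 2
    norm_num at h
    have he : C * (2 * x) / 2 = C * x := by ring
    rwa [he] at h
  have key : ∀ t ∈ s, ‖F t‖ ≤ C * t ^ 2 / 2 := by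
    intro t ht
    have := image_norm_le_of_norm_deriv_right_le_deriv_boundary hFcont hF'
      (by simp [hFdef]) hB
      (fun x hx => by simpa using step1 x (Set.Ico_subset_Icc_self hx)) ht
    simpa using this
  intro t ht
  have hf0 : ‖f 0‖ = 1 := hunit 0 h0s
  have hdecomp : γ t - γ 0 = t • f 0 + F t := by simp [hFdef]
  have hip : (t : ℝ) - ‖F t‖ ≤ inner ℝ (γ t - γ 0) (f 0) := by
    rw [hdecomp, inner_add_left, real_inner_smul_left,
      real_inner_self_eq_norm_sq, hf0]
    have := abs_real_inner_le_norm (F t) (f 0)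
    rw [hf0, mul_one] at this
    have h2 : -‖F t‖ ≤ inner ℝ (F t) (f 0) := neg_le_of_abs_le this
    nlinarith
  have hcs : inner ℝ (γ t - γ 0) (f 0) ≤ ‖γ t - γ 0‖ := by
    have := real_inner_le_norm (γ t - γ 0) (f 0)
    rwa [hf0, mul_one] at this
  have := key t ht
  linarith


lemma image_H1_le {L a : ℝ} (hL : 0 < L) (ha0 : 0 ≤ a) (ha : a ≤ L)
    {γ : ℝ → EuclideanSpace ℝ (Fin 2)}
    (hγ : ContDiffOn ℝ 2 γ (Set.Icc 0 L))
    (hunit : ∀ t ∈ Set.Icc (0:ℝ) L, ‖derivWithin γ (Set.Icc 0 L) t‖ = 1) :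
    μH[1] (γ '' Set.Icc 0 a) ≤ ENNReal.ofReal a := by
  have hlip : LipschitzOnWith 1 γ (Set.Icc 0 L) := by
    apply Convex.lipschitzOnWith_of_nnnorm_derivWithin_le (convex_Icc 0 L)
      (hγ.differentiableOn (by norm_num))
    intro x hx
    have h := hunit x hx
    rw [← NNReal.coe_le_coe, coe_nnnorm, h]
    norm_num
  have hlip2 : LipschitzOnWith 1 γ (Set.Icc 0 a) := hlip.mono (Set.Icc_subset_Icc le_rfl ha)
  calc μH[1] (γ '' Set.Icc 0 a) ≤ (1:ℝ≥0) ^ (1:ℝ) * μH[1] (Set.Icc (0:ℝ) a) :=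
        hlip2.hausdorffMeasure_image_le zero_le_one
    _ = μH[1] (Set.Icc (0:ℝ) a) := by simp
    _ = ENNReal.ofReal a := by
        rw [MeasureTheory.hausdorffMeasure_real, Real.volume_Icc, sub_zero]


theorem stmt7 (N : ℕ) (hN : 1 ≤ N) (x₀ : EuclideanSpace ℝ (Fin 2))
    (L : Fin N → ℝ) (hL : ∀ i, 0 < L i)
    (γ : Fin N → ℝ → EuclideanSpace ℝ (Fin 2))
    (hsmooth : ∀ i, ContDiffOn ℝ 2 (γ i) (Set.Icc 0 (L i)))
    (hinj : ∀ i, Set.InjOn (γ i) (Set.Icc 0 (L i)))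
    (harc : ∀ i, ∀ t ∈ Set.Icc (0:ℝ) (L i), ‖derivWithin (γ i) (Set.Icc 0 (L i)) t‖ = 1)
    (hstart : ∀ i, γ i 0 = x₀)
    (hmeet : ∀ i j, i ≠ j →
      (γ i '' Set.Icc 0 (L i)) ∩ (γ j '' Set.Icc 0 (L j)) = {x₀}) :
    ∃ ρ₀ > (0:ℝ), ∀ ρ ∈ Set.Ioo (0:ℝ) ρ₀,
      μH[1] ((⋃ i, γ i '' Set.Icc 0 (L i)) ∩ Metric.ball x₀ ρ)
        ≤ ENNReal.ofReal ((N : ℝ) * ρ + (N : ℝ) * ρ ^ 2 *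
            ⨆ i, ⨆ t : Set.Icc (0:ℝ) (L i),
              ‖derivWithin (derivWithin (γ i) (Set.Icc 0 (L i))) (Set.Icc 0 (L i)) (t : ℝ)‖) := by
  haveI : Nonempty (Fin N) := ⟨⟨0, hN⟩⟩
  set C : ℝ := ⨆ i, ⨆ t : Set.Icc (0:ℝ) (L i),
      ‖derivWithin (derivWithin (γ i) (Set.Icc 0 (L i))) (Set.Icc 0 (L i)) (t : ℝ)‖ with hCdef
  have hCb : ∀ i, ∀ t ∈ Set.Icc (0:ℝ) (L i),
      ‖derivWithin (derivWithin (γ i) (Set.Icc 0 (L i))) (Set.Icc 0 (L i)) t‖ ≤ C := by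
    intro i t ht
    have hud : UniqueDiffOn ℝ (Set.Icc (0:ℝ) (L i)) := uniqueDiffOn_Icc (hL i)
    have hf1 : ContDiffOn ℝ 1 (derivWithin (γ i) (Set.Icc 0 (L i))) (Set.Icc 0 (L i)) :=
      (hsmooth i).derivWithin hud (by norm_num)
    have hgc : ContinuousOn
        (derivWithin (derivWithin (γ i) (Set.Icc 0 (L i))) (Set.Icc 0 (L i)))
        (Set.Icc 0 (L i)) := hf1.continuousOn_derivWithin hud le_rfl
    have hbdd : BddAbove (Set.range fun t : Set.Icc (0:ℝ) (L i) =>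
        ‖derivWithin (derivWithin (γ i) (Set.Icc 0 (L i))) (Set.Icc 0 (L i)) (t : ℝ)‖) := by
      have him := (isCompact_Icc.image_of_continuousOn
        (continuous_norm.comp_continuousOn hgc)).bddAbove
      rwa [Set.image_eq_range] at him
    have h1 : ‖derivWithin (derivWithin (γ i) (Set.Icc 0 (L i))) (Set.Icc 0 (L i)) t‖ ≤
        ⨆ t : Set.Icc (0:ℝ) (L i),
          ‖derivWithin (derivWithin (γ i) (Set.Icc 0 (L i))) (Set.Icc 0 (L i)) (t : ℝ)‖ :=
      le_ciSup hbdd (⟨t, ht⟩ : Set.Icc (0:ℝ) (L i))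
    rw [hCdef]
    exact h1.trans (le_ciSup (f := fun j : Fin N => ⨆ t : Set.Icc (0:ℝ) (L j),
      ‖derivWithin (derivWithin (γ j) (Set.Icc 0 (L j))) (Set.Icc 0 (L j)) (t : ℝ)‖)
      (Set.finite_range _).bddAbove i)
  have hC0 : 0 ≤ C :=
    le_trans (norm_nonneg _) (hCb ⟨0, hN⟩ 0 ⟨le_rfl, (hL _).le⟩)
  have hC1 : (0:ℝ) < C + 1 := by linarith
  set ε : ℝ := 1 / (C + 1) with hεdef
  have hε0 : 0 < ε := by positivity
  have hKey : ∀ i, ∃ d > (0:ℝ), ∀ t ∈ Set.Icc (min (L i) ε) (L i), d ≤ dist (γ i t) x₀ := by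
    intro i
    have hT0 : 0 < min (L i) ε := lt_min (hL i) hε0
    have hTL : min (L i) ε ≤ L i := min_le_left _ _
    set K := γ i '' Set.Icc (min (L i) ε) (L i) with hKdef
    have hKcomp : IsCompact K := isCompact_Icc.image_of_continuousOn
      ((hsmooth i).continuousOn.mono (Set.Icc_subset_Icc hT0.le le_rfl))
    have hKne : K.Nonempty := (Set.nonempty_Icc.2 hTL).image _
    have hx0 : x₀ ∉ K := by
      rintro ⟨t, ht, hte⟩
      have ht' : t ∈ Set.Icc (0:ℝ) (L i) := ⟨hT0.le.trans ht.1, ht.2⟩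
      have : t = 0 := hinj i ht' ⟨le_rfl, (hL i).le⟩ (hte.trans (hstart i).symm)
      linarith [ht.1]
    refine ⟨Metric.infDist x₀ K, (hKcomp.isClosed.notMem_iff_infDist_pos hKne).1 hx0, ?_⟩
    intro t ht
    rw [dist_comm]
    exact Metric.infDist_le_dist_of_mem ⟨t, ht, rfl⟩
  choose d hd0 hdfar using hKey
  refine ⟨min (Finset.univ.inf' Finset.univ_nonempty d) (ε/5), ?_, ?_⟩
  · exact lt_min ((Finset.lt_inf'_iff _).2 fun i _ => hd0 i) (by positivity)
  intro ρ hρ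
  obtain ⟨hρ0, hρ1⟩ := hρ
  have hρd : ∀ i, ρ < d i := fun i =>
    hρ1.trans_le ((min_le_left _ _).trans (Finset.inf'_le _ (Finset.mem_univ i)))
  have hρε : ρ < ε / 5 := hρ1.trans_le (min_le_right _ _)
  have hCρ : C * ρ ≤ 1 / 5 := by
    have : C * ρ ≤ C * (ε / 5) := by nlinarith
    calc C * ρ ≤ C * (ε/5) := this
      _ = (C / (C+1)) / 5 := by rw [hεdef]; ring
      _ ≤ 1 / 5 := by
          have : C / (C + 1) ≤ 1 := by
            rw [div_le_one hC1]; linarith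
          linarith
  have hsub : ∀ i, (γ i '' Set.Icc 0 (L i)) ∩ Metric.ball x₀ ρ ⊆
      γ i '' Set.Icc 0 (min (L i) (ρ + C * ρ ^ 2)) := by
    intro i x hx
    obtain ⟨⟨t, ht, rfl⟩, hball⟩ := hx
    have hball' : ‖γ i t - x₀‖ < ρ := by
      rw [← dist_eq_norm]; exact Metric.mem_ball.1 hball
    refine ⟨t, ⟨ht.1, le_min ht.2 ?_⟩, rfl⟩
    by_cases hcase : t ≤ min (L i) ε
    · have hlow := curve_lower (hL i) (hsmooth i) (hCb i) (harc i) t ht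
      rw [hstart i] at hlow
      have h1 : t - C * t ^ 2 / 2 < ρ := lt_of_le_of_lt hlow hball'
      have htε : t ≤ ε := hcase.trans (min_le_right _ _)
      have hCt : C * t ≤ 1 := by
        calc C * t ≤ C * ε := by nlinarith
          _ = C / (C + 1) := by rw [hεdef]; ring
          _ ≤ 1 := by rw [div_le_one hC1]; linarith
      by_contra hcon
      push_neg at hcon
      have ht0 : 0 ≤ t := ht.1
      have hCρ0 : 0 ≤ C * ρ := mul_nonneg hC0 hρ0.le
      have hu : 0 < t - (ρ + C * ρ ^ 2) := sub_pos.2 hcon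
      have hw : 0 ≤ 2 - C * (t + (ρ + C * ρ ^ 2)) := by nlinarith
      have hq : 0 ≤ (C * ρ ^ 2) * (1/2 - C * ρ - (C * ρ) ^ 2 / 2) :=
        mul_nonneg (mul_nonneg hC0 (sq_nonneg ρ)) (by nlinarith [mul_nonneg hCρ0 hCρ0])
      have h2 : ρ ≤ ρ + C * ρ ^ 2 - C * (ρ + C * ρ ^ 2) ^ 2 / 2 := by nlinarith [hq]
      have hmain : 0 ≤ (t - C * t ^ 2 / 2) - (ρ + C * ρ ^ 2 - C * (ρ + C * ρ ^ 2) ^ 2 / 2) := by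
        have := mul_nonneg hu.le hw
        nlinarith
      linarith
    · exfalso
      push_neg at hcase
      have h2 := hdfar i t ⟨hcase.le, ht.2⟩
      have h3 : dist (γ i t) x₀ < ρ := Metric.mem_ball.1 hball
      linarith [hρd i]
  have hone : ∀ i, μH[1] ((γ i '' Set.Icc 0 (L i)) ∩ Metric.ball x₀ ρ) ≤
      ENNReal.ofReal (ρ + C * ρ ^ 2) := by
    intro i
    have ha0 : 0 ≤ min (L i) (ρ + C * ρ ^ 2) :=
      le_min (hL i).le (by nlinarith)
    refine le_trans (measure_mono (hsub i)) (le_trans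
      (image_H1_le (hL i) ha0 (min_le_left _ _) (hsmooth i) (harc i)) ?_)
    exact ENNReal.ofReal_le_ofReal (min_le_right _ _)
  calc μH[1] ((⋃ i, γ i '' Set.Icc 0 (L i)) ∩ Metric.ball x₀ ρ)
      = μH[1] (⋃ i, (γ i '' Set.Icc 0 (L i)) ∩ Metric.ball x₀ ρ) := by
        rw [Set.iUnion_inter]
    _ ≤ ∑' i, μH[1] ((γ i '' Set.Icc 0 (L i)) ∩ Metric.ball x₀ ρ) := measure_iUnion_le _
    _ ≤ ∑' i : Fin N, ENNReal.ofReal (ρ + C * ρ ^ 2) := ENNReal.tsum_le_tsum hone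
    _ = (N : ℝ≥0∞) * ENNReal.ofReal (ρ + C * ρ ^ 2) := by
        rw [tsum_fintype]
        simp [Finset.sum_const, Finset.card_univ, nsmul_eq_mul]
    _ = ENNReal.ofReal ((N : ℝ) * (ρ + C * ρ ^ 2)) := by
        rw [ENNReal.ofReal_mul (by positivity : (0:ℝ) ≤ (N:ℝ))]
        rw [ENNReal.ofReal_natCast]
    _ = ENNReal.ofReal ((N : ℝ) * ρ + (N : ℝ) * ρ ^ 2 * C) := by
        congr 1; ring
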